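/- Implicit product: defining R ⇒ R' := K·(R → R')·K^∪ where K := λx.λy.x, we have t₁ ⟦R ⇒ R'⟧_γ t₂ iff for all (x,x') ∈ ⟦R⟧_γ, t₁ ⟦R'⟧_γ t₂. -/

import Mathlib

namespace RelTT

/-- Untyped lambda terms (de Bruijn indices). -/
inductive Term : Type
  | var : ℕ → Term
  | lam : Term → Term
  | app : Term → Term → Term

namespace Term

/-- Lift free variables ≥ c by one. -/
def lift : Term → ℕ → Term
  | var k, c => if k < c then var k else var (k+1)
  | lam t, c => lam (lift t (c+1))
  | app t u, c => app (lift t c) (lift u c)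

/-- Capture-avoiding substitution of `s` for variable `n`. -/
def subst : Term → ℕ → Term → Term
  | var k, n, s => if k = n then s else if n < k then var (k-1) else var k
  | lam t, n, s => lam (subst t (n+1) (lift s 0))
  | app t u, n, s => app (subst t n s) (subst u n s)

end Term

/-- βη-equivalence of untyped lambda terms. -/
inductive Beq : Term → Term → Prop
  | beta (t u : Term) : Beq (Term.app (Term.lam t) u) (Term.subst t 0 u)
  | eta (t : Term) : Beq (Term.lam (Term.app (Term.lift t 0) (Term.var 0))) t
  | refl (t : Term) : Beq t t
  | symm {t u} : Beq t u → Beq u t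
  | trans {t u v} : Beq t u → Beq u v → Beq t v
  | appCongr {t t' u u'} : Beq t t' → Beq u u' → Beq (Term.app t u) (Term.app t' u')
  | lamCongr {t t'} : Beq t t' → Beq (Term.lam t) (Term.lam t')

/-- Binary relations on terms. -/
abbrev Rel := Term → Term → Prop

/-- A relation is βη-closed iff it respects βη-equivalence on both sides. -/
def BetaEtaClosed (r : Rel) : Prop :=
  ∀ t₁ t₂ t₁' t₂', r t₁ t₂ → Beq t₁' t₁ → Beq t₂' t₂ → r t₁' t₂'

/-- Relational types of RelTT (type variables are de Bruijn indices). -/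
inductive Ty : Type
  | var : ℕ → Ty
  | arrow : Ty → Ty → Ty
  | all : Ty → Ty
  | conv : Ty → Ty
  | comp : Ty → Ty → Ty
  | prom : Term → Ty

/-- Environments map type variables to relations. -/
abbrev Env := ℕ → Rel

def Env.cons (r : Rel) (γ : Env) : Env
  | 0 => r
  | n+1 => γ n

/-- The relational semantics of types. -/
def interp : Ty → Env → Rel
  | Ty.var n, γ => γ n
  | Ty.arrow R R', γ => fun t t' =>
      ∀ a a', interp R γ a a' → interp R' γ (Term.app t a) (Term.app t' a')
  | Ty.all R, γ => fun t t' =>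
      ∀ r : Rel, BetaEtaClosed r → interp R (Env.cons r γ) t t'
  | Ty.conv R, γ => fun t t' => interp R γ t' t
  | Ty.comp R R', γ => fun t t' => ∃ u, interp R γ t u ∧ interp R' γ u t'
  | Ty.prom tm, γ => fun t t' => Beq (Term.app tm t) t'

/-- All relations in the environment are βη-closed. -/
def EnvClosed (γ : Env) : Prop := ∀ n, BetaEtaClosed (γ n)

def I : Term := Term.lam (Term.var 0)
def K : Term := Term.lam (Term.lam (Term.var 1))

/-- Implicit product: R ⇒ R' := K·(R → R')·K^∪. -/
def Ty.imp (R R' : Ty) : Ty :=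
  Ty.comp (Ty.prom K) (Ty.comp (Ty.arrow R R') (Ty.conv (Ty.prom K)))

theorem subst_lift (t : Term) : ∀ c s, Term.subst (Term.lift t c) c s = t := by
  induction t with
  | var k =>
    intro c s
    simp only [Term.lift]
    by_cases h : k < c
    · simp [h, Term.subst, Nat.ne_of_lt h, Nat.not_lt.2 (Nat.le_of_lt h)]
    · have h1 : k + 1 ≠ c := by omega
      have h2 : c < k + 1 := by omega
      simp [h, Term.subst, h1, h2]
  | lam t ih => intro c s; simp [Term.lift, Term.subst, ih]
  | app t u iht ihu => intro c s; simp [Term.lift, Term.subst, iht, ihu]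

theorem K_beq (t x : Term) : Beq (Term.app (Term.app K t) x) t := by
  have h1 : Beq (Term.app K t) (Term.lam (Term.lift t 0)) := by
    have := Beq.beta (Term.lam (Term.var 1)) t
    simpa [Term.subst, K] using this
  have h2 : Beq (Term.app (Term.lam (Term.lift t 0)) x) t := by
    have := Beq.beta (Term.lift t 0) x
    rwa [subst_lift] at this
  exact Beq.trans (Beq.appCongr h1 (Beq.refl x)) h2

theorem interp_closed (T : Ty) (γ : Env) (hγ : EnvClosed γ) :
    BetaEtaClosed (interp T γ) := by
  induction T generalizing γ with
  | var n => exact hγ n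
  | arrow R R' ihR ihR' =>
    intro t₁ t₂ t₁' t₂' h h1 h2 a a' ha
    exact ihR' γ hγ _ _ _ _ (h a a' ha) (Beq.appCongr h1 (Beq.refl a))
      (Beq.appCongr h2 (Beq.refl a'))
  | all R ih =>
    intro t₁ t₂ t₁' t₂' h h1 h2 r hr
    refine ih (Env.cons r γ) ?_ _ _ _ _ (h r hr) h1 h2
    intro n; cases n with
    | zero => exact hr
    | succ n => exact hγ n
  | conv R ih =>
    intro t₁ t₂ t₁' t₂' h h1 h2
    exact ih γ hγ _ _ _ _ h h2 h1
  | comp R R' ihR ihR' =>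
    rintro t₁ t₂ t₁' t₂' ⟨u, hu, hu'⟩ h1 h2
    exact ⟨u, ihR γ hγ _ _ _ _ hu h1 (Beq.refl u),
      ihR' γ hγ _ _ _ _ hu' (Beq.refl u) h2⟩
  | prom tm =>
    intro t₁ t₂ t₁' t₂' h h1 h2
    exact Beq.trans (Beq.trans (Beq.appCongr (Beq.refl tm) h1) h) (Beq.symm h2)

/-- Implicit product: t₁ ⟦R ⇒ R'⟧_γ t₂ ↔ for all (x,x') ∈ ⟦R⟧_γ, t₁ ⟦R'⟧_γ t₂. -/
theorem implicit_product (R R' : Ty) (γ : Env) (hγ : EnvClosed γ) (t₁ t₂ : Term) :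
    interp (Ty.imp R R') γ t₁ t₂ ↔ ∀ x x', interp R γ x x' → interp R' γ t₁ t₂ := by
  constructor
  · rintro ⟨u, hu, v, hv, hv2⟩ x x' hx
    -- hu : Beq (app K t₁) u ; hv2 : Beq (app K t₂) v
    have h := hv x x' hx
    have e1 : Beq t₁ (Term.app u x) :=
      Beq.symm (Beq.trans (Beq.appCongr (Beq.symm hu) (Beq.refl x)) (K_beq t₁ x))
    have e2 : Beq t₂ (Term.app v x') :=
      Beq.symm (Beq.trans (Beq.appCongr (Beq.symm hv2) (Beq.refl x')) (K_beq t₂ x'))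
    exact interp_closed R' γ hγ _ _ _ _ h e1 e2
  · intro h
    refine ⟨Term.app K t₁, Beq.refl _, Term.app K t₂, ?_, Beq.refl _⟩
    intro a a' ha
    exact interp_closed R' γ hγ _ _ _ _ (h a a' ha) (K_beq t₁ a) (K_beq t₂ a')

end RelTT
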